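/- Let M be a finite MDP, let H ≥ 0 be a finite horizon, and let π and π_β be policies such that π_β(a|s) > 0 whenever π(a|s) > 0. Then the per-decision importance sampling estimator is unbiased: E_{τ ∼ p_{π_β}}[ Σ_{t=0}^{H} γ^t (∏_{t'=0}^{t} π(a_{t'}|s_{t'})/π_β(a_{t'}|s_{t'})) · r(s_t,a_t) ] = J(π); that is, importance weights for time steps after t may be dropped from the weight multiplying the reward at time t without introducing bias. -/

import Mathlib

open Finset

/-- Probability of a trajectory `τ = (s_0, a_0, …, s_H, a_H)` in a finite-horizon MDP
with `H + 1` decision steps, initial distribution `d0`, transition kernel `T` and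
policy `π`. -/
noncomputable def trajP {S A : Type} [Fintype S] [Fintype A] (H : ℕ)
    (d0 : S → ℝ) (T : S → A → S → ℝ) (π : S → A → ℝ)
    (τ : (Fin (H + 1) → S) × (Fin (H + 1) → A)) : ℝ :=
  d0 (τ.1 0) * (∏ t : Fin (H + 1), π (τ.1 t) (τ.2 t)) *
    ∏ t : Fin H, T (τ.1 t.castSucc) (τ.2 t.castSucc) (τ.1 t.succ)


/-- Finite-horizon expected discounted return
`J(π) = E_{τ ∼ p_π}[Σ_{t=0}^H γ^t r(s_t, a_t)]`. -/
noncomputable def Jret {S A : Type} [Fintype S] [Fintype A] (H : ℕ)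
    (d0 : S → ℝ) (T : S → A → S → ℝ) (π : S → A → ℝ) (r : S → A → ℝ) (γ : ℝ) : ℝ :=
  ∑ τ : (Fin (H + 1) → S) × (Fin (H + 1) → A),
    trajP H d0 T π τ * ∑ t : Fin (H + 1), γ ^ (t : ℕ) * r (τ.1 t) (τ.2 t)

lemma snoc_sum {S : Type} [Fintype S] {n : ℕ} (F : (Fin (n+1) → S) → ℝ) :
    ∑ f : Fin (n+1) → S, F f = ∑ σ : Fin n → S, ∑ x : S, F (Fin.snoc σ x) := by
  rw [← Equiv.sum_comp (Fin.snocEquiv fun _ => S) F, Fintype.sum_prod_type]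
  rw [Finset.sum_comm]
  simp [Fin.snocEquiv]

lemma snoc_sum2 {S A : Type} [Fintype S] [Fintype A] {n : ℕ}
    (F : (Fin (n+1) → S) × (Fin (n+1) → A) → ℝ) :
    ∑ τ : (Fin (n+1) → S) × (Fin (n+1) → A), F τ
      = ∑ σ : Fin n → S, ∑ α : Fin n → A, ∑ x : S, ∑ a : A,
          F (Fin.snoc σ x, Fin.snoc α a) := by
  rw [Fintype.sum_prod_type, snoc_sum (fun f => ∑ g, F (f, g))]
  refine Finset.sum_congr rfl fun σ _ => ?_
  calc ∑ x : S, ∑ g : Fin (n+1) → A, F (Fin.snoc σ x, g)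
      = ∑ x : S, ∑ α : Fin n → A, ∑ a : A, F (Fin.snoc σ x, Fin.snoc α a) :=
        Finset.sum_congr rfl fun x _ => snoc_sum _
    _ = ∑ α : Fin n → A, ∑ x : S, ∑ a : A, F (Fin.snoc σ x, Fin.snoc α a) :=
        Finset.sum_comm

lemma peel {S A : Type} [Fintype S] [Fintype A] {n : ℕ}
    (d0 : S → ℝ) (T : S → A → S → ℝ) (hT1 : ∀ s a, ∑ s', T s a s' = 1)
    (r : S → A → ℝ) (ρ : Fin (n+2) → S → A → ℝ)
    (hρ : ∀ s, ∑ a, ρ (Fin.last (n+1)) s a = 1) (t₀ : Fin (n+1)) :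
    ∑ τ : (Fin (n+2) → S) × (Fin (n+2) → A),
      d0 (τ.1 0) * (∏ i, ρ i (τ.1 i) (τ.2 i)) *
        (∏ i : Fin (n+1), T (τ.1 i.castSucc) (τ.2 i.castSucc) (τ.1 i.succ)) *
        r (τ.1 t₀.castSucc) (τ.2 t₀.castSucc)
    = ∑ τ : (Fin (n+1) → S) × (Fin (n+1) → A),
      d0 (τ.1 0) * (∏ i, ρ i.castSucc (τ.1 i) (τ.2 i)) *
        (∏ i : Fin n, T (τ.1 i.castSucc) (τ.2 i.castSucc) (τ.1 i.succ)) *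
        r (τ.1 t₀) (τ.2 t₀) := by
  rw [snoc_sum2, Fintype.sum_prod_type]
  refine Finset.sum_congr rfl fun σ _ => Finset.sum_congr rfl fun α _ => ?_
  have h1 : ∀ (x : S) (a : A),
      (∏ i : Fin (n+2), ρ i ((Fin.snoc σ x : Fin (n+2) → S) i) ((Fin.snoc α a : Fin (n+2) → A) i))
        = (∏ i : Fin (n+1), ρ i.castSucc (σ i) (α i)) * ρ (Fin.last (n+1)) x a := by
    intro x a
    rw [Fin.prod_univ_castSucc]
    simp
  have h2 : ∀ (x : S) (a : A),
      (∏ i : Fin (n+1), T ((Fin.snoc σ x : Fin (n+2) → S) i.castSucc) ((Fin.snoc α a : Fin (n+2) → A) i.castSucc)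
          ((Fin.snoc σ x : Fin (n+2) → S) i.succ))
        = (∏ i : Fin n, T (σ i.castSucc) (α i.castSucc) (σ i.succ)) *
            T (σ (Fin.last n)) (α (Fin.last n)) x := by
    intro x a
    rw [Fin.prod_univ_castSucc]
    simp [Fin.succ_castSucc, -Fin.castSucc_succ]
  have h0 : ∀ x : S, (Fin.snoc σ x : Fin (n+2) → S) 0 = σ 0 := by
    intro x
    rw [show (0 : Fin (n+2)) = Fin.castSucc 0 by simp, Fin.snoc_castSucc]
  have hr : ∀ (x : S) (a : A),
      r ((Fin.snoc σ x : Fin (n+2) → S) t₀.castSucc) ((Fin.snoc α a : Fin (n+2) → A) t₀.castSucc) = r (σ t₀) (α t₀) := by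
    intro x a; rw [Fin.snoc_castSucc, Fin.snoc_castSucc]
  calc ∑ x : S, ∑ a : A,
        d0 ((Fin.snoc σ x : Fin (n+2) → S) 0) * (∏ i : Fin (n+2), ρ i ((Fin.snoc σ x : Fin (n+2) → S) i) ((Fin.snoc α a : Fin (n+2) → A) i)) *
          (∏ i : Fin (n+1), T ((Fin.snoc σ x : Fin (n+2) → S) i.castSucc) ((Fin.snoc α a : Fin (n+2) → A) i.castSucc)
            ((Fin.snoc σ x : Fin (n+2) → S) i.succ)) * r ((Fin.snoc σ x : Fin (n+2) → S) t₀.castSucc) ((Fin.snoc α a : Fin (n+2) → A) t₀.castSucc)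
      = ∑ x : S, ∑ a : A,
          (d0 (σ 0) * (∏ i : Fin (n+1), ρ i.castSucc (σ i) (α i)) *
            (∏ i : Fin n, T (σ i.castSucc) (α i.castSucc) (σ i.succ)) * r (σ t₀) (α t₀)) *
            (T (σ (Fin.last n)) (α (Fin.last n)) x * ρ (Fin.last (n+1)) x a) := by
        refine Finset.sum_congr rfl fun x _ => Finset.sum_congr rfl fun a _ => ?_
        rw [h0, h1, h2, hr]; ring
    _ = d0 (σ 0) * (∏ i : Fin (n+1), ρ i.castSucc (σ i) (α i)) *
          (∏ i : Fin n, T (σ i.castSucc) (α i.castSucc) (σ i.succ)) * r (σ t₀) (α t₀) := by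
        simp_rw [← mul_assoc, ← Finset.mul_sum, hρ, mul_one]
        rw [← Finset.mul_sum, hT1, mul_one]

lemma Zeq {S A : Type} [Fintype S] [Fintype A]
    (d0 : S → ℝ) (T : S → A → S → ℝ) (hT1 : ∀ s a, ∑ s', T s a s' = 1)
    (r : S → A → ℝ) :
    ∀ (n : ℕ) (t : Fin (n+1)) (ρ ρ' : Fin (n+1) → S → A → ℝ),
      (∀ i, i ≤ t → ρ i = ρ' i) →
      (∀ i s, ∑ a, ρ i s a = 1) → (∀ i s, ∑ a, ρ' i s a = 1) →
      ∑ τ : (Fin (n+1) → S) × (Fin (n+1) → A),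
        d0 (τ.1 0) * (∏ i, ρ i (τ.1 i) (τ.2 i)) *
          (∏ i : Fin n, T (τ.1 i.castSucc) (τ.2 i.castSucc) (τ.1 i.succ)) *
          r (τ.1 t) (τ.2 t)
      = ∑ τ : (Fin (n+1) → S) × (Fin (n+1) → A),
        d0 (τ.1 0) * (∏ i, ρ' i (τ.1 i) (τ.2 i)) *
          (∏ i : Fin n, T (τ.1 i.castSucc) (τ.2 i.castSucc) (τ.1 i.succ)) *
          r (τ.1 t) (τ.2 t) := by
  intro n
  induction n with
  | zero =>
    intro t ρ ρ' h _ _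
    have : ρ = ρ' := funext fun i => h i (by omega)
    rw [this]
  | succ n ih =>
    intro t ρ ρ' h hρ hρ'
    rcases Fin.eq_castSucc_or_eq_last t with ⟨t₀, rfl⟩ | rfl
    · rw [peel d0 T hT1 r ρ (fun s => hρ _ s) t₀, peel d0 T hT1 r ρ' (fun s => hρ' _ s) t₀]
      exact ih t₀ (fun i => ρ i.castSucc) (fun i => ρ' i.castSucc)
        (fun i hi => h i.castSucc (by exact Fin.castSucc_le_castSucc_iff.mpr hi))
        (fun i s => hρ _ s) (fun i s => hρ' _ s)
    · have : ρ = ρ' := funext fun i => h i (Fin.le_last i)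
      rw [this]

/-- **Unbiasedness of the per-decision importance sampling estimator.**
Importance weights for time steps after `t` may be dropped from the weight multiplying
the reward at time `t` without introducing bias:
`E_{τ ∼ p_{π_β}}[Σ_{t=0}^H γ^t (∏_{t'=0}^t π(a_{t'}|s_{t'})/π_β(a_{t'}|s_{t'})) r(s_t,a_t)] = J(π)`. -/
theorem per_decision_importance_sampling_unbiased
    {S A : Type} [Fintype S] [Fintype A]
    (H : ℕ) (d0 : S → ℝ) (T : S → A → S → ℝ)
    (π πβ : S → A → ℝ) (r : S → A → ℝ) (γ : ℝ) (hγ0 : 0 < γ) (hγ1 : γ < 1)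
    (hd00 : ∀ s, 0 ≤ d0 s) (hd01 : ∑ s, d0 s = 1)
    (hT0 : ∀ s a s', 0 ≤ T s a s') (hT1 : ∀ s a, ∑ s', T s a s' = 1)
    (hπ0 : ∀ s a, 0 ≤ π s a) (hπ1 : ∀ s, ∑ a, π s a = 1)
    (hβ0 : ∀ s a, 0 ≤ πβ s a) (hβ1 : ∀ s, ∑ a, πβ s a = 1)
    (hsupp : ∀ s a, 0 < π s a → 0 < πβ s a) :
    ∑ τ : (Fin (H + 1) → S) × (Fin (H + 1) → A),
        trajP H d0 T πβ τ *
          ∑ t : Fin (H + 1), γ ^ (t : ℕ) *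
            (∏ t' ∈ univ.filter fun t' : Fin (H + 1) => t' ≤ t,
              π (τ.1 t') (τ.2 t') / πβ (τ.1 t') (τ.2 t')) *
            r (τ.1 t) (τ.2 t) =
      Jret H d0 T π r γ := by
  classical
  have key : ∀ s a, πβ s a * (π s a / πβ s a) = π s a := by
    intro s a
    rcases eq_or_ne (πβ s a) 0 with h | h
    · have hπ : π s a = 0 := by
        by_contra hc
        have := hsupp s a (lt_of_le_of_ne (hπ0 s a) (Ne.symm hc))
        rw [h] at this; exact lt_irrefl 0 this
      simp [h, hπ]
    · rw [mul_comm, div_mul_cancel₀ _ h]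
  -- per-time-step identity
  have main : ∀ t : Fin (H + 1),
      (∑ τ : (Fin (H + 1) → S) × (Fin (H + 1) → A),
        trajP H d0 T πβ τ * (γ ^ (t : ℕ) *
          (∏ t' ∈ univ.filter fun t' : Fin (H + 1) => t' ≤ t,
            π (τ.1 t') (τ.2 t') / πβ (τ.1 t') (τ.2 t')) * r (τ.1 t) (τ.2 t)))
      = ∑ τ : (Fin (H + 1) → S) × (Fin (H + 1) → A),
          trajP H d0 T π τ * (γ ^ (t : ℕ) * r (τ.1 t) (τ.2 t)) := by
    intro t
    set ρt : Fin (H + 1) → S → A → ℝ := fun i => if i ≤ t then π else πβ with hρt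
    have point : ∀ τ : (Fin (H + 1) → S) × (Fin (H + 1) → A),
        trajP H d0 T πβ τ *
            (∏ t' ∈ univ.filter fun t' : Fin (H + 1) => t' ≤ t,
              π (τ.1 t') (τ.2 t') / πβ (τ.1 t') (τ.2 t'))
          = d0 (τ.1 0) * (∏ i, ρt i (τ.1 i) (τ.2 i)) *
              (∏ i : Fin H, T (τ.1 i.castSucc) (τ.2 i.castSucc) (τ.1 i.succ)) := by
      intro τ
      have hsplitβ := (Finset.prod_filter_mul_prod_filter_not univ
        (fun t' : Fin (H + 1) => t' ≤ t) (fun t' => πβ (τ.1 t') (τ.2 t'))).symm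
      have hsplitρ := (Finset.prod_filter_mul_prod_filter_not univ
        (fun t' : Fin (H + 1) => t' ≤ t) (fun t' => ρt t' (τ.1 t') (τ.2 t'))).symm
      have h1 : (∏ t' ∈ univ.filter fun t' : Fin (H + 1) => t' ≤ t,
            πβ (τ.1 t') (τ.2 t')) *
            (∏ t' ∈ univ.filter fun t' : Fin (H + 1) => t' ≤ t,
              π (τ.1 t') (τ.2 t') / πβ (τ.1 t') (τ.2 t'))
          = ∏ t' ∈ univ.filter fun t' : Fin (H + 1) => t' ≤ t,
              π (τ.1 t') (τ.2 t') := by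
        rw [← Finset.prod_mul_distrib]
        exact Finset.prod_congr rfl fun i _ => key _ _
      have h2 : (∏ i, ρt i (τ.1 i) (τ.2 i))
          = (∏ t' ∈ univ.filter fun t' : Fin (H + 1) => t' ≤ t,
              π (τ.1 t') (τ.2 t')) *
            ∏ t' ∈ univ.filter fun t' : Fin (H + 1) => ¬ t' ≤ t,
              πβ (τ.1 t') (τ.2 t') := by
        rw [hsplitρ]
        congr 1
        · exact Finset.prod_congr rfl fun i hi => by
            simp only [mem_filter] at hi
            simp [hρt, hi.2]
        · exact Finset.prod_congr rfl fun i hi => by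
            simp only [mem_filter] at hi
            simp [hρt, hi.2]
      rw [trajP, hsplitβ, h2, ← h1]; ring
    calc ∑ τ : (Fin (H + 1) → S) × (Fin (H + 1) → A),
          trajP H d0 T πβ τ * (γ ^ (t : ℕ) *
            (∏ t' ∈ univ.filter fun t' : Fin (H + 1) => t' ≤ t,
              π (τ.1 t') (τ.2 t') / πβ (τ.1 t') (τ.2 t')) * r (τ.1 t) (τ.2 t))
        = γ ^ (t : ℕ) * ∑ τ : (Fin (H + 1) → S) × (Fin (H + 1) → A),
            d0 (τ.1 0) * (∏ i, ρt i (τ.1 i) (τ.2 i)) *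
              (∏ i : Fin H, T (τ.1 i.castSucc) (τ.2 i.castSucc) (τ.1 i.succ)) *
              r (τ.1 t) (τ.2 t) := by
          rw [Finset.mul_sum]
          refine Finset.sum_congr rfl fun τ _ => ?_
          rw [← point τ]; ring
      _ = γ ^ (t : ℕ) * ∑ τ : (Fin (H + 1) → S) × (Fin (H + 1) → A),
            d0 (τ.1 0) * (∏ i, π (τ.1 i) (τ.2 i)) *
              (∏ i : Fin H, T (τ.1 i.castSucc) (τ.2 i.castSucc) (τ.1 i.succ)) *
              r (τ.1 t) (τ.2 t) := by
          congr 1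
          exact Zeq d0 T hT1 r H t ρt (fun _ => π)
            (fun i hi => by simp [hρt, hi])
            (fun i s => by by_cases hi : i ≤ t <;> simp [hρt, hi, hπ1, hβ1])
            (fun i s => hπ1 s)
      _ = _ := by
          rw [Finset.mul_sum]
          refine Finset.sum_congr rfl fun τ _ => ?_
          rw [trajP]; ring
  calc ∑ τ : (Fin (H + 1) → S) × (Fin (H + 1) → A),
        trajP H d0 T πβ τ *
          ∑ t : Fin (H + 1), γ ^ (t : ℕ) *
            (∏ t' ∈ univ.filter fun t' : Fin (H + 1) => t' ≤ t,
              π (τ.1 t') (τ.2 t') / πβ (τ.1 t') (τ.2 t')) *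
            r (τ.1 t) (τ.2 t)
      = ∑ t : Fin (H + 1), ∑ τ : (Fin (H + 1) → S) × (Fin (H + 1) → A),
          trajP H d0 T πβ τ * (γ ^ (t : ℕ) *
            (∏ t' ∈ univ.filter fun t' : Fin (H + 1) => t' ≤ t,
              π (τ.1 t') (τ.2 t') / πβ (τ.1 t') (τ.2 t')) * r (τ.1 t) (τ.2 t)) := by
        simp_rw [Finset.mul_sum]
        exact Finset.sum_comm
    _ = ∑ t : Fin (H + 1), ∑ τ : (Fin (H + 1) → S) × (Fin (H + 1) → A),
          trajP H d0 T π τ * (γ ^ (t : ℕ) * r (τ.1 t) (τ.2 t)) :=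
        Finset.sum_congr rfl fun t _ => main t
    _ = Jret H d0 T π r γ := by
        rw [Jret]
        simp_rw [Finset.mul_sum]
        exact Finset.sum_comm
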